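/- Let R be a commutative ring with 1 and define a τ_z b iff ab = 0 on R^#. Then R is a τ_z-BFR (for every nonunit a there is N(a) ∈ ℕ bounding the length of every τ_z-factorization of a) if and only if R is reduced and there exists n ∈ ℕ such that every finite set of pairwise distinct nonzero elements of R whose pairwise products are all zero has at most n elements (i.e., the clique number ω(Γ(R)) of the zero-divisor graph of R is finite). -/

import Mathlib

universe u

variable {R : Type u} [CommRing R]

/-- `a ∈ R^#`, i.e. `a` is a nonzero nonunit of `R`. -/
def IsNnu (a : R) : Prop :=
  a ≠ 0 ∧ ¬IsUnit a

/-- `a ∼ b` iff `(a) = (b)`. -/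
def RAssoc (a b : R) : Prop :=
  Ideal.span ({a} : Set R) = Ideal.span ({b} : Set R)

/-- `a ≈ b` iff `a = λ * b` for some unit `λ`. -/
def RSAssoc (a b : R) : Prop :=
  ∃ lam : Rˣ, a = (lam : R) * b

/-- `a ≅ b` iff `a ∼ b` and (`a = b = 0`, or whenever `a = r * b` then `r` is a unit). -/
def RVSAssoc (a b : R) : Prop :=
  RAssoc a b ∧ ((a = 0 ∧ b = 0) ∨ ∀ r : R, a = r * b → IsUnit r)

/-- `a = u * a₁ ⋯ aₙ` (with `l = [a₁, …, aₙ]`) is a `τ`-factorization of `a`: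
the list of factors is nonempty, all factors are nonunits, all factors are nonzero
except in the trivial `τ`-factorization `0 = u * 0` of `0`, and the factors are
pairwise related by `τ`. -/
def IsTauFact (τ : R → R → Prop) (u : Rˣ) (l : List R) (a : R) : Prop :=
  l ≠ [] ∧ (∀ x ∈ l, ¬IsUnit x) ∧ (∀ x ∈ l, x = 0 → l = [0]) ∧
    l.Pairwise τ ∧ a = (u : R) * l.prod

/-- `b` τ-divides `a`, i.e. `b` occurs as a factor in some τ-factorization of `a`. -/
def TauDvd (τ : R → R → Prop) (b a : R) : Prop :=
  ∃ (u : Rˣ) (l : List R), IsTauFact τ u l a ∧ b ∈ l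

/-- `a` is τ-irreducible: `a` is a nonunit and every τ-factorization of `a`
has a factor `∼ a`. -/
def TauIrreducible (τ : R → R → Prop) (a : R) : Prop :=
  ¬IsUnit a ∧ ∀ (u : Rˣ) (l : List R), IsTauFact τ u l a → ∃ x ∈ l, RAssoc a x

/-- `a` is τ-strongly irreducible: `a` is a nonunit and every τ-factorization of `a`
has a factor `≈ a`. -/
def TauSIrreducible (τ : R → R → Prop) (a : R) : Prop :=
  ¬IsUnit a ∧ ∀ (u : Rˣ) (l : List R), IsTauFact τ u l a → ∃ x ∈ l, RSAssoc a x

/-- `a` is τ-m-irreducible: `a` is a nonunit and in every τ-factorization of `a`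
every factor is `∼ a`. -/
def TauMIrreducible (τ : R → R → Prop) (a : R) : Prop :=
  ¬IsUnit a ∧ ∀ (u : Rˣ) (l : List R), IsTauFact τ u l a → ∀ x ∈ l, RAssoc a x

/-- `a` is τ-very strongly irreducible: `a` is a nonunit, `a ≅ a`, and `a` has
no nontrivial τ-factorizations. -/
def TauVSIrreducible (τ : R → R → Prop) (a : R) : Prop :=
  ¬IsUnit a ∧ RVSAssoc a a ∧ ∀ (u : Rˣ) (l : List R), IsTauFact τ u l a → l.length = 1

/-- `R` is τ-atomic: every nonunit has a τ-factorization into τ-irreducible factors. -/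
def TauAtomic (τ : R → R → Prop) : Prop :=
  ∀ a : R, ¬IsUnit a → ∃ (u : Rˣ) (l : List R),
    IsTauFact τ u l a ∧ ∀ x ∈ l, TauIrreducible τ x

/-- `τ` is refinable: replacing each factor of a τ-factorization by the factors of a
τ-factorization of it (absorbing the units into the leading unit) again yields a
τ-factorization. -/
def TauRefinable (τ : R → R → Prop) : Prop :=
  ∀ (a : R) (u : Rˣ) (l : List R), IsTauFact τ u l a →
    ∀ L : List (Rˣ × List R),
      List.Forall₂ (fun x p => IsTauFact τ p.1 p.2 x) l L →
      IsTauFact τ (u * (L.map Prod.fst).prod) (L.map Prod.snd).flatten a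

/-- `τ` is associate preserving. -/
def TauAssocPreserving (τ : R → R → Prop) : Prop :=
  ∀ a b b' : R, IsNnu b' → RAssoc b b' → τ a b → τ a b'

/-- `R` satisfies τ-ACCP: every ascending chain of principal ideals
`(a₀) ⊆ (a₁) ⊆ ⋯` with `a_{i+1} |_τ a_i` stabilizes. -/
def TauACCP (τ : R → R → Prop) : Prop :=
  ∀ f : ℕ → R,
    (∀ i, Ideal.span ({f i} : Set R) ≤ Ideal.span ({f (i + 1)} : Set R)) →
    (∀ i, TauDvd τ (f (i + 1)) (f i)) →
    ∃ N : ℕ, ∀ i, N ≤ i → Ideal.span ({f i} : Set R) = Ideal.span ({f N} : Set R)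

/-- For the relation `a τ_z b ↔ a * b = 0`: `R` is a τ_z-BFR if and only if `R` is
reduced and the clique number of the zero-divisor graph of `R` is finite, i.e. there
is `n` such that every finite set of pairwise distinct nonzero elements of `R` whose
pairwise products are all zero has at most `n` elements. -/
private lemma prod_eq_zero_of_pairwise_mul_zero {R : Type u} [CommRing R] {l : List R}
    (h2 : 2 ≤ l.length) (hp : l.Pairwise (fun x y : R => x * y = 0)) : l.prod = 0 := by
  match l, h2, hp with
  | a :: b :: t, _, hp =>
    have hab : a * b = 0 := (List.pairwise_cons.mp hp).1 b List.mem_cons_self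
    simp only [List.prod_cons, ← mul_assoc, hab, zero_mul]

private lemma isReduced_of_sq {R : Type u} [CommRing R]
    (h : ∀ x : R, x * x = 0 → x = 0) : IsReduced R := by
  have key : ∀ n : ℕ, ∀ x : R, x ^ n = 0 → x = 0 := by
    intro n
    induction n using Nat.strong_induction_on with
    | _ n ih =>
      intro x hx
      match n, hx with
      | 0, hx =>
        calc x = x * x ^ 0 := by rw [pow_zero, mul_one]
        _ = 0 := by rw [hx, mul_zero]
      | 1, hx => simpa using hx
      | (k+2), hx =>
        apply h
        apply ih (k+1) (by omega)
        have : (x * x) ^ (k + 1) = x ^ (k + 2) * x ^ k := by ring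
        rw [this, hx, zero_mul]
  exact ⟨fun {x} hx => by obtain ⟨n, hn⟩ := hx; exact key n x hn⟩

theorem tauZ_BFR_iff :
    (∀ a : R, ¬IsUnit a → ∃ N : ℕ, ∀ (u : Rˣ) (l : List R),
        IsTauFact (fun x y : R => x * y = 0) u l a → l.length ≤ N) ↔
      (IsReduced R ∧ ∃ n : ℕ, ∀ s : Finset R, (∀ x ∈ s, x ≠ 0) →
        (∀ x ∈ s, ∀ y ∈ s, x ≠ y → x * y = 0) → s.card ≤ n) := by
  classical
  constructor
  · intro hBFR
    constructor
    · -- reduced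
      apply isReduced_of_sq
      intro x hx
      by_contra hx0
      have hxu : ¬IsUnit x := fun h => hx0 (h.mul_left_cancel (by rw [hx, mul_zero]))
      have h0u : ¬IsUnit (0 : R) := by
        intro h
        have h01 : (0 : R) = 1 := isUnit_zero_iff.mp h
        exact hx0 (by calc x = x * 1 := (mul_one x).symm
          _ = x * 0 := by rw [h01]
          _ = 0 := mul_zero x)
      obtain ⟨N, hN⟩ := hBFR 0 h0u
      have hfact : IsTauFact (fun x y : R => x * y = 0) 1 (List.replicate (N + 2) x) 0 := by
        refine ⟨by simp, ?_, ?_, ?_, ?_⟩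
        · intro y hy; rw [List.eq_of_mem_replicate hy]; exact hxu
        · intro y hy hy0; exact absurd (hy0 ▸ List.eq_of_mem_replicate hy).symm hx0
        · exact List.pairwise_replicate.mpr (Or.inr hx)
        · rw [List.prod_replicate, Units.val_one, one_mul]
          have : x ^ (N + 2) = x * x * x ^ N := by ring
          rw [this, hx, zero_mul]
      have := hN 1 _ hfact
      simp only [List.length_replicate] at this
      omega
    · -- clique bound
      by_cases hT : IsUnit (0 : R)
      · refine ⟨0, fun s hs0 _ => ?_⟩
        have h01 : (0 : R) = 1 := isUnit_zero_iff.mp hT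
        have hse : s = ∅ := Finset.eq_empty_of_forall_notMem fun x hx =>
          hs0 x hx (by calc x = x * 1 := (mul_one x).symm
            _ = x * 0 := by rw [h01]
            _ = 0 := mul_zero x)
        simp [hse]
      · obtain ⟨N, hN⟩ := hBFR 0 hT
        refine ⟨N + 1, fun s hs0 hsp => ?_⟩
        by_cases hcard : s.card ≤ 1
        · omega
        push_neg at hcard
        have hlen : s.toList.length = s.card := Finset.length_toList s
        have hnd : s.toList.Nodup := Finset.nodup_toList s
        have hpair : s.toList.Pairwise (fun x y : R => x * y = 0) :=
          hnd.imp_of_mem fun {x y} hx hy hxy =>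
            hsp x (Finset.mem_toList.mp hx) y (Finset.mem_toList.mp hy) hxy
        have hfact : IsTauFact (fun x y : R => x * y = 0) 1 s.toList 0 := by
          refine ⟨?_, ?_, ?_, hpair, ?_⟩
          · intro h
            rw [h] at hlen
            simp at hlen
            omega
          · intro x hx hxu
            have hxs := Finset.mem_toList.mp hx
            obtain ⟨y, hy, hyx⟩ := Finset.exists_mem_ne hcard x
            have hzero : y * x = 0 := hsp y hy x hxs hyx
            have : y = 0 := by
              have := hxu.mul_left_cancel (a := x) (b := y) (c := 0)
                (by rw [mul_comm x y, hzero, mul_zero])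
              exact this
            exact hs0 y hy this
          · intro x hx hx0
            exact absurd hx0 (hs0 x (Finset.mem_toList.mp hx))
          · rw [Units.val_one, one_mul,
              prod_eq_zero_of_pairwise_mul_zero (by omega) hpair]
        have := hN 1 _ hfact
        omega
  · rintro ⟨hred, n, hn⟩ a _
    refine ⟨max n 1, fun u l hl => ?_⟩
    obtain ⟨hne, hnu, hnz, hp, heq⟩ := hl
    by_cases h0 : (0 : R) ∈ l
    · rw [hnz 0 h0 rfl]
      simp
    · have hz : ∀ x ∈ l, x ≠ 0 := fun x hx hx0 => h0 (hx0 ▸ hx)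
      haveI := hred
      have hnd : l.Nodup := hp.imp_of_mem fun {x y} hx _ hxy hxy' =>
        hz x hx (IsNilpotent.eq_zero ⟨2, by rw [pow_two]; exact hxy' ▸ hxy⟩)
      have hcard := hn l.toFinset
        (fun x hx => hz x (List.mem_toFinset.mp hx))
        (fun x hx y hy hxy =>
          (haveI : Std.Symm (fun x y : R => x * y = 0) := ⟨fun x y h => by rw [mul_comm]; exact h⟩; hp.forall)
            (List.mem_toFinset.mp hx) (List.mem_toFinset.mp hy) hxy)
      have := List.toFinset_card_of_nodup hnd
      omega
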